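/- Fix a countable set K partitioned into a nonempty subset K_W and a subset K_B, a generator matrix V on K, a stochastic matrix R on K, strictly positive arrival rates λ(n) > 0 (n ∈ ℕ₀) and service rates μ(n) > 0 (n ≥ 1). Let θ : K → [0,∞) be such that for every k ∈ K the families (θ(m)·R(m,k))_{m∈K_W} and (θ(m)·v(m,k))_{m∈K∖{k}} are summable, and define π(n,k) := (∏_{i=0}^{n−1} λ(i)/μ(i+1)) · θ(k) for (n,k) ∈ ℕ₀×K. Then π satisfies the global balance equations, i.e. for all (n,k) ∈ ℕ₀×K: π(n,k)·( 1[k∈K_W]·λ(n) + Σ_{m≠k} v(k,m) + 1[k∈K_W]·1[n>0]·μ(n) ) = 1[k∈K_W]·1[n>0]·λ(n−1)·π(n−1,k) + μ(n+1)·Σ_{m∈K_W} π(n+1,m)·R(m,k) + Σ_{m≠k} π(n,m)·v(m,k), if and only if θ·Q̃(n) = 0 for every n ∈ ℕ₀, i.e. Σ_{k∈K} θ(k)·q̃(n;k,m) = 0 for all n ∈ ℕ₀ and m ∈ K, where q̃(n;k,m) = λ(n)·R(k,m)·1[k∈K_W] + v(k,m) for k ≠ m and q̃(n;k,k) = −(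 1[k∈K_W]·λ(n)·(1−R(k,k)) + Σ_{m≠k} v(k,m) ). -/

import Mathlib

lemma tsum_split_ne {α : Type*} [DecidableEq α] (f : α → ℝ) (m : α)
    (h : Summable (fun k : {k : α // k ≠ m} => f (k : α))) :
    Summable f ∧ (∑' k : α, f k) = f m + ∑' k : {k : α // k ≠ m}, f (k : α) := by
  have hfin : Summable f := by
    rw [← Finset.summable_compl_iff ({m} : Finset α)]
    exact (((Equiv.subtypeEquivRight (fun x => by simp :
        ∀ x : α, x ∉ ({m} : Finset α) ↔ x ≠ m)).summable_iff).mpr h).congr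
      fun x => by simp [Equiv.subtypeEquivRight]; rfl
  have h2 : ∑' k : {k : α // k ≠ m}, f (k : α)
      = ∑' k : {k : α // k ≠ m}, (fun n => if n = m then 0 else f n) (k : α) :=
    tsum_congr fun k => by simp [k.2]
  have h3 : ∑' k : {k : α // k ≠ m}, (fun n => if n = m then 0 else f n) (k : α)
      = ∑' k : α, (if k = m then 0 else f k) := by
    have := tsum_subtype_eq_of_support_subset (f := fun n => if n = m then 0 else f n)
      (s := {k : α | k ≠ m}) (by
        intro x hx
        simp only [Function.mem_support, ne_eq] at hx
        intro hxm
        exact hx (by simp [hxm]))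
    exact this
  exact ⟨hfin, by rw [Summable.tsum_eq_add_tsum_ite hfin m, h2, h3]⟩

lemma tsum_ite_set {α : Type*} (s : Set α) [∀ k, Decidable (k ∈ s)] (g : α → ℝ)
    (hsum : Summable (fun k : s => g (k : α))) :
    Summable (fun k : α => if k ∈ s then g k else 0) ∧
      (∑' k : α, (if k ∈ s then g k else 0)) = ∑' k : s, g (k : α) := by
  have hind : (fun k : α => if k ∈ s then g k else 0) = s.indicator g := by
    funext k; simp [Set.indicator_apply]
  constructor
  · rw [hind]
    exact (summable_subtype_iff_indicator).mp hsum
  · rw [hind, tsum_subtype s g]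

/-- The product-form vector π(n,k) = (∏ λ(i)/μ(i+1))·θ(k) satisfies the
global balance equations of the loss system in a random environment if and only if
θ·Q̃(n) = 0 for every n. -/
theorem stmt_1 {K : Type*} [Countable K] [DecidableEq K]
    (KW KB : Set K) [∀ k, Decidable (k ∈ KW)]
    (hKW : KW.Nonempty)
    (hpart : ∀ k : K, k ∈ KW ↔ k ∉ KB)
    (v : K → K → ℝ)
    (hv_offdiag : ∀ k m, k ≠ m → 0 ≤ v k m)
    (hv_summable : ∀ k, Summable (fun m : {m : K // m ≠ k} => v k (m : K)))
    (hv_diag : ∀ k, v k k = - ∑' m : {m : K // m ≠ k}, v k (m : K))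
    (R : K → K → ℝ)
    (hR_nonneg : ∀ k m, 0 ≤ R k m)
    (hR_row : ∀ k, HasSum (fun m => R k m) 1)
    (lam : ℕ → ℝ) (hlam : ∀ n, 0 < lam n)
    (mu : ℕ → ℝ) (hmu : ∀ n, 1 ≤ n → 0 < mu n)
    (θ : K → ℝ) (hθ_nonneg : ∀ k, 0 ≤ θ k)
    (hθR_summable : ∀ k : K, Summable (fun m : KW => θ (m : K) * R (m : K) k))
    (hθv_summable : ∀ k : K,
      Summable (fun m : {m : K // m ≠ k} => θ (m : K) * v (m : K) k))
    (π : ℕ → K → ℝ)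
    (hπ : ∀ n k, π n k = (∏ i ∈ Finset.range n, lam i / mu (i + 1)) * θ k)
    (q : ℕ → K → K → ℝ)
    (hq_offdiag : ∀ n k m, k ≠ m →
      q n k m = lam n * R k m * (if k ∈ KW then 1 else 0) + v k m)
    (hq_diag : ∀ n k,
      q n k k = -((if k ∈ KW then (1:ℝ) else 0) * lam n * (1 - R k k)
        + ∑' m : {m : K // m ≠ k}, v k (m : K))) :
    (∀ (n : ℕ) (k : K),
        π n k * ((if k ∈ KW then (1:ℝ) else 0) * lam n
            + (∑' m : {m : K // m ≠ k}, v k (m : K))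
            + (if k ∈ KW then (1:ℝ) else 0) * (if 0 < n then (1:ℝ) else 0) * mu n)
          = (if k ∈ KW then (1:ℝ) else 0) * (if 0 < n then (1:ℝ) else 0)
              * lam (n - 1) * π (n - 1) k
            + mu (n + 1) * (∑' m : KW, π (n + 1) (m : K) * R (m : K) k)
            + ∑' m : {m : K // m ≠ k}, π n (m : K) * v (m : K) k)
    ↔ (∀ (n : ℕ) (m : K), ∑' k : K, θ k * q n k m = 0) := by
  have hcpos : ∀ n, (0:ℝ) < ∏ i ∈ Finset.range n, lam i / mu (i + 1) := fun n =>
    Finset.prod_pos fun i _ => div_pos (hlam i) (hmu (i + 1) (by omega))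
  have hcrec : ∀ n, mu (n + 1) * ∏ i ∈ Finset.range (n + 1), lam i / mu (i + 1)
      = lam n * ∏ i ∈ Finset.range n, lam i / mu (i + 1) := by
    intro n
    have hne : mu (n + 1) ≠ 0 := (hmu (n + 1) (by omega)).ne'
    rw [Finset.prod_range_succ, show mu (n + 1) * ((∏ i ∈ Finset.range n, lam i / mu (i + 1)) * (lam n / mu (n + 1))) = lam n * (∏ i ∈ Finset.range n, lam i / mu (i + 1)) * (mu (n + 1) / mu (n + 1)) from by ring, div_self hne, mul_one]
  -- the common reduced equation E n k
  have hEbal : ∀ (n : ℕ) (k : K),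
      (π n k * ((if k ∈ KW then (1:ℝ) else 0) * lam n
            + (∑' m : {m : K // m ≠ k}, v k (m : K))
            + (if k ∈ KW then (1:ℝ) else 0) * (if 0 < n then (1:ℝ) else 0) * mu n)
          = (if k ∈ KW then (1:ℝ) else 0) * (if 0 < n then (1:ℝ) else 0)
              * lam (n - 1) * π (n - 1) k
            + mu (n + 1) * (∑' m : KW, π (n + 1) (m : K) * R (m : K) k)
            + ∑' m : {m : K // m ≠ k}, π n (m : K) * v (m : K) k)
      ↔ (θ k * ((if k ∈ KW then (1:ℝ) else 0) * lam n
            + (∑' m : {m : K // m ≠ k}, v k (m : K)))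
          = lam n * (∑' m : KW, θ (m : K) * R (m : K) k)
            + ∑' m : {m : K // m ≠ k}, θ (m : K) * v (m : K) k) := by
    intro n k
    have hB : (∑' m : {m : K // m ≠ k}, π n (m : K) * v (m : K) k)
        = (∏ i ∈ Finset.range n, lam i / mu (i + 1))
          * ∑' m : {m : K // m ≠ k}, θ (m : K) * v (m : K) k := by
      rw [← tsum_mul_left]
      exact tsum_congr fun m => by rw [hπ]; ring
    have hA : (∑' m : KW, π (n + 1) (m : K) * R (m : K) k)
        = (∏ i ∈ Finset.range (n + 1), lam i / mu (i + 1))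
          * ∑' m : KW, θ (m : K) * R (m : K) k := by
      rw [← tsum_mul_left]
      exact tsum_congr fun m => by rw [hπ]; ring
    have fact2 : (if 0 < n then (1:ℝ) else 0)
          * (lam (n - 1) * ∏ i ∈ Finset.range (n - 1), lam i / mu (i + 1))
        = (if 0 < n then (1:ℝ) else 0)
          * (mu n * ∏ i ∈ Finset.range n, lam i / mu (i + 1)) := by
      rcases n with _ | j
      · simp
      · simpa using (hcrec j).symm
    rw [hB, hA, hπ n k, hπ (n - 1) k]
    have hcn : (∏ i ∈ Finset.range n, lam i / mu (i + 1)) ≠ 0 := (hcpos n).ne'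
    constructor
    · intro h
      refine mul_left_cancel₀ hcn ?_
      linear_combination h
        + ((if k ∈ KW then (1:ℝ) else 0) * θ k) * fact2
        + (∑' m : KW, θ (m : K) * R (m : K) k) * hcrec n
    · intro h
      linear_combination (∏ i ∈ Finset.range n, lam i / mu (i + 1)) * h
        - ((if k ∈ KW then (1:ℝ) else 0) * θ k) * fact2
        - (∑' m : KW, θ (m : K) * R (m : K) k) * hcrec n
  have hQ : ∀ (n : ℕ) (m : K),
      ((∑' k : K, θ k * q n k m) = 0)
      ↔ (θ m * ((if m ∈ KW then (1:ℝ) else 0) * lam n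
            + (∑' j : {j : K // j ≠ m}, v m (j : K)))
          = lam n * (∑' j : KW, θ (j : K) * R (j : K) m)
            + ∑' j : {j : K // j ≠ m}, θ (j : K) * v (j : K) m) := by
    intro n m
    obtain ⟨hgS, hgT⟩ := tsum_ite_set KW (fun k => θ k * R k m) (hθR_summable m)
    have hgsub : Summable (fun k : {k : K // k ≠ m} =>
        (if (k : K) ∈ KW then θ (k : K) * R (k : K) m else 0)) :=
      hgS.comp_injective Subtype.val_injective
    obtain ⟨hgK, hgsplit⟩ := tsum_split_ne
      (fun k => if k ∈ KW then θ k * R k m else 0) m hgsub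
    have hpt : ∀ k : {k : K // k ≠ m}, θ (k : K) * q n (k : K) m
        = lam n * (if (k : K) ∈ KW then θ (k : K) * R (k : K) m else 0)
          + θ (k : K) * v (k : K) m := by
      intro k
      rw [hq_offdiag n k m k.2]
      by_cases hk : (k : K) ∈ KW <;> simp [hk] <;> ring
    have hfsub : Summable (fun k : {k : K // k ≠ m} => θ (k : K) * q n (k : K) m) :=
      (((hgsub.mul_left (lam n)).add (hθv_summable m)).congr fun k => (hpt k).symm)
    obtain ⟨hfK, hfsplit⟩ := tsum_split_ne (fun k => θ k * q n k m) m hfsub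
    have hsubsum : (∑' k : {k : K // k ≠ m}, θ (k : K) * q n (k : K) m)
        = lam n * (∑' k : {k : K // k ≠ m},
              (if (k : K) ∈ KW then θ (k : K) * R (k : K) m else 0))
          + ∑' k : {k : K // k ≠ m}, θ (k : K) * v (k : K) m := by
      rw [tsum_congr hpt,
        Summable.tsum_add (hgsub.mul_left (lam n)) (hθv_summable m), tsum_mul_left]
    have hgrel : (∑' j : KW, θ (j : K) * R (j : K) m)
        = (if m ∈ KW then θ m * R m m else 0)
          + ∑' k : {k : K // k ≠ m},
              (if (k : K) ∈ KW then θ (k : K) * R (k : K) m else 0) :=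
      hgT.symm.trans hgsplit
    have hitm : (if m ∈ KW then θ m * R m m else 0)
        = θ m * R m m * (if m ∈ KW then (1:ℝ) else 0) := by
      by_cases hm : m ∈ KW <;> simp [hm]
    rw [hfsplit, hsubsum, hq_diag n m]
    constructor
    · intro h
      linear_combination -h - lam n * hgrel - lam n * hitm
    · intro h
      linear_combination -h - lam n * hgrel - lam n * hitm
  constructor
  · intro hb n m
    exact (hQ n m).mpr ((hEbal n m).mp (hb n m))
  · intro hq n k
    exact (hEbal n k).mpr ((hQ n k).mp (hq n k))
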